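/- Counterexample to exactness in 2D (Theorem in paper): there is no function f : ℤ² → ℝ of the form f(z₁, z₂) = αz₁ + βz₂ + γ such that f agrees on the 3×3 grid {0,1,2}² with the array w defined by w(i, j) = aᵢ·j + bᵢ for i ∈ {0,1}, j ∈ {0,1,2}, and w(2,j) determined by the column constraints w(2,j) = 2w(1,j) − w(0,j), whenever a₀ ≠ a₁. Specifically, w(0,0) − 2w(1,1) + w(2,2) = 2(a₁ − a₀) ≠ 0, while any affine f satisfies f(0,0) − 2f(1,1) + f(2,2) = 0. -/
import Mathlib


/-- counterexample to exactness in 2D. If the rows `0` and `1` of `w` are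
affine in `j` with distinct slopes `a₀ ≠ a₁` and each column has vanishing discrete
second derivative (`w 2 j = 2 * w 1 j - w 0 j`), then
`w 0 0 - 2 * w 1 1 + w 2 2 = 2(a₁ - a₀) ≠ 0`, and no affine function
`f(z₁,z₂) = α z₁ + β z₂ + γ` agrees with `w` on the 3×3 grid `{0,1,2}²`. -/
theorem stmt_9 (a₀ a₁ b₀ b₁ : ℝ) (ha : a₀ ≠ a₁) (w : ℕ → ℕ → ℝ)
    (h0 : ∀ j ≤ 2, w 0 j = a₀ * j + b₀)
    (h1 : ∀ j ≤ 2, w 1 j = a₁ * j + b₁)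
    (h2 : ∀ j ≤ 2, w 2 j = 2 * w 1 j - w 0 j) :
    w 0 0 - 2 * w 1 1 + w 2 2 = 2 * (a₁ - a₀) ∧
    w 0 0 - 2 * w 1 1 + w 2 2 ≠ 0 ∧
    ¬ ∃ α β γ : ℝ, ∀ i ≤ 2, ∀ j ≤ 2, w i j = α * i + β * j + γ := by
  have e00 := h0 0 (by norm_num)
  have e02 := h0 2 (by norm_num)
  have e11 := h1 1 (by norm_num)
  have e12 := h1 2 (by norm_num)
  have e22 := h2 2 (by norm_num)
  have key : w 0 0 - 2 * w 1 1 + w 2 2 = 2 * (a₁ - a₀) := by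
    rw [e22, e12, e11, e02, e00]; push_cast; ring
  refine ⟨key, ?_, ?_⟩
  · rw [key]
    intro h
    apply ha
    linarith [sub_eq_zero.mp (by linarith : a₁ - a₀ = 0)]
  · rintro ⟨α, β, γ, hf⟩
    have f00 := hf 0 (by norm_num) 0 (by norm_num)
    have f11 := hf 1 (by norm_num) 1 (by norm_num)
    have f22 := hf 2 (by norm_num) 2 (by norm_num)
    have : w 0 0 - 2 * w 1 1 + w 2 2 = 0 := by
      rw [f00, f11, f22]; push_cast; ring
    rw [key] at this
    apply ha; linarith
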